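/- Over a set of Boolean variables V, a family F of pairwise non-equivalent propositional formulas (as functions (V → Bool) → Bool) of size N admits a narrowing set of valuations T with ⌈log₂ N⌉ ≤ |T| ≤ N − 1 when N ≥ 2. -/

import Mathlib

private lemma sep_exists {V : Type*} [Fintype V] (F : Finset ((V → Bool) → Bool)) :
    ∃ T : Finset (V → Bool), T.card ≤ F.card - 1 ∧
      ∀ φ ∈ F, ∀ ψ ∈ F, φ ≠ ψ → ∃ v ∈ T, φ v ≠ ψ v := by
  induction F using Finset.strongInduction with
  | _ F ih =>
    by_cases hex : ∃ φ ∈ F, ∃ ψ ∈ F, φ ≠ ψ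
    · obtain ⟨φ, hφ, ψ, hψ, hne⟩ := hex
      have : ∃ v, φ v ≠ ψ v := by
        by_contra h
        push_neg at h
        exact hne (funext h)
      obtain ⟨v, hv⟩ := this
      set F0 := F.filter (fun f => f v = false) with hF0
      set F1 := F.filter (fun f => f v = true) with hF1
      have hmem0 : ∀ f, f ∈ F0 ↔ f ∈ F ∧ f v = false := fun f => Finset.mem_filter
      have hmem1 : ∀ f, f ∈ F1 ↔ f ∈ F ∧ f v = true := fun f => Finset.mem_filter
      -- one of φ, ψ is in F0 and the other in F1
      have hkey : (∃ f ∈ F, f ∈ F0) ∧ (∃ f ∈ F, f ∈ F1) ∧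
          (∃ f ∈ F, f ∉ F0) ∧ (∃ f ∈ F, f ∉ F1) := by
        cases hφv : φ v with
        | false =>
          have hψv : ψ v = true := by
            cases hψv : ψ v
            · exact absurd (hφv.trans hψv.symm) hv
            · rfl
          refine ⟨⟨φ, hφ, (hmem0 φ).mpr ⟨hφ, hφv⟩⟩, ⟨ψ, hψ, (hmem1 ψ).mpr ⟨hψ, hψv⟩⟩,
            ⟨ψ, hψ, fun h => absurd ((hmem0 ψ).mp h).2 (by simp [hψv])⟩,
            ⟨φ, hφ, fun h => absurd ((hmem1 φ).mp h).2 (by simp [hφv])⟩⟩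
        | true =>
          have hψv : ψ v = false := by
            cases hψv : ψ v
            · rfl
            · exact absurd (hφv.trans hψv.symm) hv
          refine ⟨⟨ψ, hψ, (hmem0 ψ).mpr ⟨hψ, hψv⟩⟩, ⟨φ, hφ, (hmem1 φ).mpr ⟨hφ, hφv⟩⟩,
            ⟨φ, hφ, fun h => absurd ((hmem0 φ).mp h).2 (by simp [hφv])⟩,
            ⟨ψ, hψ, fun h => absurd ((hmem1 ψ).mp h).2 (by simp [hψv])⟩⟩
      obtain ⟨⟨f0, _, hf0⟩, ⟨f1, _, hf1⟩, ⟨g0, hg0F, hg0⟩, ⟨g1, hg1F, hg1⟩⟩ := hkey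
      have hsub0 : F0 ⊂ F := ⟨Finset.filter_subset _ _, fun hsub => hg0 (hsub hg0F)⟩
      have hsub1 : F1 ⊂ F := ⟨Finset.filter_subset _ _, fun hsub => hg1 (hsub hg1F)⟩
      obtain ⟨T0, hT0c, hT0⟩ := ih F0 hsub0
      obtain ⟨T1, hT1c, hT1⟩ := ih F1 hsub1
      refine ⟨insert v (T0 ∪ T1), ?_, ?_⟩
      · have hcards : F0.card + F1.card = F.card := by
          have h2 : Finset.filter (fun f => ¬ f v = false) F
              = Finset.filter (fun f => f v = true) F :=
            Finset.filter_congr (by intro f _; simp)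
          rw [hF0, hF1, ← h2]
          exact Finset.card_filter_add_card_filter_not (s := F) (p := fun f => f v = false)
        have h0pos : 1 ≤ F0.card := Finset.card_pos.mpr ⟨f0, hf0⟩
        have h1pos : 1 ≤ F1.card := Finset.card_pos.mpr ⟨f1, hf1⟩
        calc (insert v (T0 ∪ T1)).card ≤ (T0 ∪ T1).card + 1 := Finset.card_insert_le _ _
          _ ≤ (T0.card + T1.card) + 1 :=
              Nat.add_le_add_right (Finset.card_union_le _ _) 1
          _ ≤ ((F0.card - 1) + (F1.card - 1)) + 1 :=
              Nat.add_le_add_right (Nat.add_le_add hT0c hT1c) 1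
          _ ≤ F.card - 1 := by omega
      · intro f hf g hg hfg
        cases hfv : f v <;> cases hgv : g v
        · obtain ⟨w, hw, hwne⟩ := hT0 f ((hmem0 f).mpr ⟨hf, hfv⟩)
            g ((hmem0 g).mpr ⟨hg, hgv⟩) hfg
          exact ⟨w, Finset.mem_insert_of_mem (Finset.mem_union_left _ hw), hwne⟩
        · exact ⟨v, Finset.mem_insert_self _ _, by simp [hfv, hgv]⟩
        · exact ⟨v, Finset.mem_insert_self _ _, by simp [hfv, hgv]⟩
        · obtain ⟨w, hw, hwne⟩ := hT1 f ((hmem1 f).mpr ⟨hf, hfv⟩)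
            g ((hmem1 g).mpr ⟨hg, hgv⟩) hfg
          exact ⟨w, Finset.mem_insert_of_mem (Finset.mem_union_right _ hw), hwne⟩
    · push_neg at hex
      exact ⟨∅, Nat.zero_le _, fun φ hφ ψ hψ hne => absurd (hex φ hφ ψ hψ) (by simp [hne])⟩

/-- Over Boolean variables `V`, a family of `N ≥ 2` pairwise non-equivalent
propositional formulas admits a narrowing set `T` of valuations with
`⌈log₂ N⌉ ≤ |T| ≤ N - 1`. -/
theorem propositional_narrowing_bounds {V : Type*} [Fintype V]
    (F : Finset ((V → Bool) → Bool)) (N : ℕ) (hN : 2 ≤ N) (hcard : F.card = N) :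
    ∃ T : Finset (V → Bool), Nat.clog 2 N ≤ T.card ∧ T.card ≤ N - 1 ∧
      ∀ φ ∈ F, ∀ ψ ∈ F, φ ≠ ψ → ∃ v ∈ T, φ v ≠ ψ v := by
  obtain ⟨T, hTc, hTsep⟩ := sep_exists F
  refine ⟨T, ?_, hcard ▸ hTc, hTsep⟩
  -- lower bound: restriction map is injective
  have hinj : Function.Injective (fun (φ : ↥F) (v : ↥T) => (φ : (V → Bool) → Bool) v) := by
    intro φ ψ h
    by_contra hne
    have hne' : (φ : (V → Bool) → Bool) ≠ ψ := fun he => hne (Subtype.ext he)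
    obtain ⟨v, hv, hvne⟩ := hTsep φ φ.2 ψ ψ.2 hne'
    exact hvne (congrFun h ⟨v, hv⟩)
  have hle : N ≤ 2 ^ T.card := by
    have := Fintype.card_le_of_injective _ hinj
    simpa [Fintype.card_coe, hcard, Fintype.card_fun] using this
  exact (Nat.clog_le_iff_le_pow (by norm_num)).mpr hle
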